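/- Every dense Gδ subset of Baire space ℕ^ℕ is homeomorphic to ℕ^ℕ. -/

import Mathlib

open List

/-- Initial segment of length `n` of an infinite binary sequence. -/
def seqTake (a : ℕ → Bool) (n : ℕ) : List Bool := List.ofFn (fun i : Fin n => a i)

/-- The shift `σ ∔ a` : flip bits of `a` at positions `i < |σ|` where `σ(i) = 1`
    (addition modulo 2), leave other positions unchanged. -/
def shiftSeq (σ : List Bool) (a : ℕ → Bool) : ℕ → Bool :=
  fun i => if i < σ.length then xor (σ.getD i false) (a i) else a i

/-- The shift `σ ∔ v` of a finite string `v`. -/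
def shiftStr (σ v : List Bool) : List Bool :=
  seqTake (shiftSeq σ (fun i => v.getD i false)) v.length

/-- The equivalence relation `E₀`: the sequences differ in finitely many positions. -/
def E0 (a b : ℕ → Bool) : Prop := {k | a k ≠ b k}.Finite

/-- The set `[T]` of infinite branches of a tree `T ⊆ 2^{<ω}`. -/
def branches (T : Set (List Bool)) : Set (ℕ → Bool) := {a | ∀ n, seqTake a n ∈ T}

/-- The portion `T↾u = {s ∈ T : u ⊆ s ∨ s ⊆ u}`. -/
def portion (T : Set (List Bool)) (u : List Bool) : Set (List Bool) :=
  {s ∈ T | u <+: s ∨ s <+: u}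

/-- A nonempty tree closed under initial segments. -/
def IsTree (T : Set (List Bool)) : Prop :=
  T.Nonempty ∧ ∀ s ∈ T, ∀ t : List Bool, t <+: s → t ∈ T

/-- A perfect tree: a tree in which every node extends to a splitting node. -/
def IsPerfectTree (T : Set (List Bool)) : Prop :=
  IsTree T ∧ ∀ s ∈ T, ∃ t ∈ T, s <+: t ∧ t ++ [false] ∈ T ∧ t ++ [true] ∈ T

/-- `u₀⌢i₀⌢u₁⌢i₁⌢…⌢uₙ⌢iₙ`. -/
def silverPrefix (u : ℕ → List Bool) (i : ℕ → Bool) : ℕ → List Bool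
  | 0 => u 0 ++ [i 0]
  | n+1 => silverPrefix u i n ++ u (n+1) ++ [i (n+1)]

/-- The branch `u₀⌢i₀⌢u₁⌢i₁⌢…` of the Silver tree with strings `uₖ` and bits `iₖ`. -/
def silverBranch (u : ℕ → List Bool) (i : ℕ → Bool) : ℕ → Bool :=
  fun m => (silverPrefix u i m).getD m false

/-- `T` is the Silver tree with defining strings `uₖ`: `T` consists exactly of all
    initial segments of the branches `u₀⌢i₀⌢u₁⌢i₁⌢…`. -/
def SilverTreeWith (u : ℕ → List Bool) (T : Set (List Bool)) : Prop :=
  T = {s | ∃ i : ℕ → Bool, s = seqTake (silverBranch u i) s.length}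

def IsSilver (T : Set (List Bool)) : Prop := ∃ u, SilverTreeWith u T

/-- The splitting levels `hₙ = |u₀|+1+…+|u_{n-1}|+1+|uₙ|` of a Silver tree. -/
def hLevel (u : ℕ → List Bool) (n : ℕ) : ℕ :=
  (∑ k ∈ Finset.range n, ((u k).length + 1)) + (u n).length

/-- `S` n-refines the Silver tree `T` (with strings `uT`): `S ⊆ T` and the first
    `n` defining strings agree. -/
def RefinesN (uT : ℕ → List Bool) (S T : Set (List Bool)) (n : ℕ) : Prop :=
  S ⊆ T ∧ ∃ uS, SilverTreeWith uS S ∧ ∀ k < n, uS k = uT k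

/-- `S` is clopen in `T`: a finite union of portions of `T`. -/
def ClopenIn (S T : Set (List Bool)) : Prop :=
  ∃ F : Finset (List Bool), ↑F ⊆ T ∧ S = ⋃ u ∈ F, portion T u

namespace BaireHomeo

open PiNat Set Function

noncomputable section

/-- Cylinder determined by a finite string in `res`-convention (head = last symbol). -/
def cyl (s : List ℕ) : Set (ℕ → ℕ) := {y | PiNat.res y s.length = s}

lemma mem_cyl {y : ℕ → ℕ} {s : List ℕ} : y ∈ cyl s ↔ res y s.length = s := Iff.rfl

lemma res_suffix (x : ℕ → ℕ) {m n : ℕ} (h : m ≤ n) : res x m <:+ res x n := by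
  induction n with
  | zero => obtain rfl : m = 0 := Nat.le_zero.1 h; exact List.suffix_rfl
  | succ n ih =>
    rcases Nat.lt_or_ge m (n + 1) with h' | h'
    · exact (ih (Nat.lt_succ_iff.1 h')).trans (res_succ x n ▸ List.suffix_cons (x n) (res x n))
    · obtain rfl : m = n + 1 := le_antisymm h h'
      exact List.suffix_rfl

lemma suffix_res_eq {x : ℕ → ℕ} {n : ℕ} {u : List ℕ} (h : u <:+ res x n) :
    u = res x u.length := by
  have hl : u.length ≤ n := by simpa [res_length] using h.length_le
  have h2 : res x u.length <:+ res x n := res_suffix x hl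
  rcases List.suffix_or_suffix_of_suffix h h2 with h3 | h3
  · exact h3.eq_of_length (by simp [res_length])
  · exact (h3.eq_of_length (by simp [res_length])).symm

lemma mem_cyl_of_suffix {s t : List ℕ} (hst : s <:+ t) {y : ℕ → ℕ} (hy : y ∈ cyl t) :
    y ∈ cyl s := by
  rw [mem_cyl] at hy
  rw [← hy] at hst
  exact (suffix_res_eq hst).symm

lemma exists_res_eq (s : List ℕ) : ∃ x : ℕ → ℕ, res x s.length = s := by
  induction s with
  | nil => exact ⟨fun _ => 0, rfl⟩
  | cons a u ih =>
    obtain ⟨x, hx⟩ := ih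
    refine ⟨Function.update x u.length a, ?_⟩
    rw [List.length_cons, res_succ]
    have h1 : Function.update x u.length a u.length = a := by simp
    have h2 : res (Function.update x u.length a) u.length = res x u.length :=
      res_eq_res.2 fun i hi => Function.update_of_ne hi.ne a x
    rw [h1, h2, hx]

/-- A point of the cylinder of `s`. -/
def pt (s : List ℕ) : ℕ → ℕ := (exists_res_eq s).choose

lemma pt_mem (s : List ℕ) : pt s ∈ cyl s := (exists_res_eq s).choose_spec

lemma cyl_res (y : ℕ → ℕ) (n : ℕ) : cyl (res y n) = cylinder y n := by
  rw [cylinder_eq_res]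
  unfold cyl
  rw [res_length]

lemma isOpen_cyl (s : List ℕ) : IsOpen (cyl s) := by
  have h := pt_mem s
  rw [mem_cyl] at h
  have : cyl s = cylinder (pt s) s.length := by
    conv_lhs => rw [← h]
    exact cyl_res _ _
  rw [this]
  exact isOpen_cylinder (E := fun _ : ℕ => ℕ) _ _

lemma cyl_nonempty (s : List ℕ) : (cyl s).Nonempty := ⟨pt s, pt_mem s⟩

/-- Minimal strict extensions of `t` whose cylinder is inside `U`. -/
def minExt (U : Set (ℕ → ℕ)) (t : List ℕ) : Set (List ℕ) :=
  {t' | t <:+ t' ∧ t.length < t'.length ∧ cyl t' ⊆ U ∧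
    ∀ t'' : List ℕ, t.length < t''.length → t''.length < t'.length → t'' <:+ t' →
      ¬ cyl t'' ⊆ U}

lemma exists_cyl_subset {U : Set (ℕ → ℕ)} (hU : IsOpen U) {y : ℕ → ℕ} (hy : y ∈ U) :
    ∃ n, cyl (res y n) ⊆ U := by
  obtain ⟨V, ⟨x, n, rfl⟩, hyV, hVU⟩ :=
    (isTopologicalBasis_cylinders fun _ : ℕ => ℕ).exists_subset_of_mem_open hy hU
  refine ⟨n, ?_⟩
  rw [cyl_res, mem_cylinder_iff_eq.1 hyV]
  exact hVU

lemma self_mem_cyl_res (y : ℕ → ℕ) (n : ℕ) : y ∈ cyl (res y n) := by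
  rw [mem_cyl, res_length]

lemma minExt_cover {U : Set (ℕ → ℕ)} (hU : IsOpen U) {t : List ℕ} {y : ℕ → ℕ}
    (ht : y ∈ cyl t) (hy : y ∈ U) : ∃ t' ∈ minExt U t, y ∈ cyl t' := by
  obtain ⟨n0, hn0⟩ := exists_cyl_subset hU hy
  have hP : ∃ k, t.length < k ∧ cyl (res y k) ⊆ U := by
    refine ⟨max n0 (t.length + 1), lt_of_lt_of_le (Nat.lt_succ_self _) (le_max_right _ _), ?_⟩
    intro z hz
    exact hn0 (mem_cyl_of_suffix (res_suffix y (le_max_left _ _)) hz)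
  classical
  let k := Nat.find hP
  have hk := Nat.find_spec hP
  refine ⟨res y k, ⟨?_, ?_, hk.2, ?_⟩, self_mem_cyl_res y k⟩
  · rw [mem_cyl] at ht
    rw [← ht]
    exact res_suffix y hk.1.le
  · rw [res_length]; exact hk.1
  · intro t'' h1 h2 h3 h4
    rw [res_length] at h2
    have ht'' : t'' = res y t''.length := suffix_res_eq h3
    have := Nat.find_min hP h2
    exact this ⟨h1, ht'' ▸ h4⟩

lemma minExt_unique {U : Set (ℕ → ℕ)} {t t₁ t₂ : List ℕ} (h₁ : t₁ ∈ minExt U t)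
    (h₂ : t₂ ∈ minExt U t) {y : ℕ → ℕ} (hy₁ : y ∈ cyl t₁) (hy₂ : y ∈ cyl t₂) : t₁ = t₂ := by
  have key : ∀ t₁ t₂ : List ℕ, t₁ ∈ minExt U t → t₂ ∈ minExt U t → y ∈ cyl t₁ → y ∈ cyl t₂ →
      t₁.length ≤ t₂.length → t₁ = t₂ := by
    intro t₁ t₂ h₁ h₂ hy₁ hy₂ hl
    rw [mem_cyl] at hy₁ hy₂
    have hsuf : t₁ <:+ t₂ := by
      rw [← hy₁, ← hy₂]
      exact res_suffix y hl
    rcases eq_or_lt_of_le hl with he | hlt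
    · exact hsuf.eq_of_length he
    · exact absurd h₁.2.2.1 (h₂.2.2.2 t₁ h₁.2.1 hlt hsuf)
  rcases le_total t₁.length t₂.length with h | h
  · exact key t₁ t₂ h₁ h₂ hy₁ hy₂ h
  · exact (key t₂ t₁ h₂ h₁ hy₂ hy₁ h).symm

lemma minExt_infinite {U : Set (ℕ → ℕ)} (hU : IsOpen U) (hUd : Dense U) (t : List ℕ) :
    (minExt U t).Infinite := by
  have key : ∀ a : ℕ, ∃ t' ∈ minExt U t, (a :: t) <:+ t' := by
    intro a
    obtain ⟨y, hyU, hy⟩ := hUd.exists_mem_open (isOpen_cyl (a :: t)) (cyl_nonempty (a :: t))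
    have hyt : y ∈ cyl t := mem_cyl_of_suffix (List.suffix_cons a t) hy
    obtain ⟨t', ht', hyt'⟩ := minExt_cover hU hyt hyU
    refine ⟨t', ht', ?_⟩
    rw [mem_cyl] at hy hyt'
    have h1 : res y (t.length + 1) = a :: t := by simpa using hy
    have hs : res y (t.length + 1) <:+ res y t'.length := by
      refine res_suffix y ?_
      have := ht'.2.1
      omega
    rw [h1, hyt'] at hs
    exact hs
  choose f hf hsuf using key
  apply Set.infinite_of_injective_forall_mem (f := f) _ hf
  intro a b hab
  have h1 : (a :: t) <:+ f b := hab ▸ hsuf a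
  have h2 : (b :: t) <:+ f b := hsuf b
  rcases List.suffix_or_suffix_of_suffix h1 h2 with h | h
  · simpa using h.eq_of_length (by simp)
  · simpa using (h.eq_of_length (by simp)).symm

open scoped Classical in
/-- An enumeration of the minimal extensions. -/
def childSeq (U : Set (ℕ → ℕ)) (t : List ℕ) : ℕ → List ℕ :=
  if h : Nonempty (ℕ ≃ minExt U t) then fun n => ((Classical.choice h) n : List ℕ)
  else fun _ => t

lemma childSeq_spec {U : Set (ℕ → ℕ)} (hU : IsOpen U) (hUd : Dense U) (t : List ℕ) :
    (∀ n, childSeq U t n ∈ minExt U t) ∧ Function.Injective (childSeq U t) ∧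
      ∀ t' ∈ minExt U t, ∃ n, childSeq U t n = t' := by
  have hc : (minExt U t).Countable := Set.to_countable _
  have hi := minExt_infinite hU hUd t
  haveI := hc.to_subtype
  haveI := hi.to_subtype
  have h : Nonempty (ℕ ≃ minExt U t) := by
    obtain ⟨d⟩ := nonempty_denumerable (minExt U t)
    exact ⟨(Denumerable.eqv (minExt U t)).symm⟩
  have he : childSeq U t = fun n => ((Classical.choice h) n : List ℕ) := by
    simp only [childSeq, h, dite_true, reduceDIte]
  set e := Classical.choice h with hee
  rw [he]
  refine ⟨fun n => (e n).2, ?_, ?_⟩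
  · intro a b hab
    exact e.injective (Subtype.coe_injective hab)
  · intro t' ht'
    exact ⟨e.symm ⟨t', ht'⟩, by simp⟩

/-- The scheme: strings in `res`-convention mapped to strings defining cylinders. -/
def phi (U : ℕ → Set (ℕ → ℕ)) : List ℕ → List ℕ
  | [] => []
  | n :: s => childSeq (U s.length) (phi U s) n

variable {U : ℕ → Set (ℕ → ℕ)} (hO : ∀ m, IsOpen (U m)) (hDe : ∀ m, Dense (U m))

include hO hDe

lemma phi_cons_mem (n : ℕ) (s : List ℕ) :
    phi U (n :: s) ∈ minExt (U s.length) (phi U s) :=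
  (childSeq_spec (hO s.length) (hDe s.length) (phi U s)).1 n

lemma phi_suffix_cons (n : ℕ) (s : List ℕ) : phi U s <:+ phi U (n :: s) :=
  (phi_cons_mem hO hDe n s).1

lemma phi_length : ∀ s : List ℕ, s.length ≤ (phi U s).length := by
  intro s
  induction s with
  | nil => simp
  | cons a u ih =>
    have := (phi_cons_mem hO hDe a u).2.1
    simp only [List.length_cons]
    omega

lemma phi_subset (n : ℕ) (s : List ℕ) : cyl (phi U (n :: s)) ⊆ U s.length :=
  (phi_cons_mem hO hDe n s).2.2.1

lemma phi_mono {s t : List ℕ} (h : s <:+ t) : phi U s <:+ phi U t := by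
  induction t with
  | nil => rw [List.suffix_nil.1 h]
  | cons a t ih =>
    rcases List.suffix_cons_iff.1 h with h' | h'
    · rw [h']
    · exact (ih h').trans (phi_suffix_cons hO hDe a t)

lemma phi_child_unique {s : List ℕ} {n n' : ℕ} {y : ℕ → ℕ}
    (hy : y ∈ cyl (phi U (n :: s))) (hy' : y ∈ cyl (phi U (n' :: s))) : n = n' := by
  have h1 := phi_cons_mem hO hDe n s
  have h2 := phi_cons_mem hO hDe n' s
  have heq : phi U (n :: s) = phi U (n' :: s) := minExt_unique h1 h2 hy hy'
  exact (childSeq_spec (hO s.length) (hDe s.length) (phi U s)).2.1 heq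

lemma pt_agree {s t : List ℕ} (h : s <:+ t ∨ t <:+ s) {i : ℕ}
    (hs : i < (phi U s).length) (ht : i < (phi U t).length) :
    pt (phi U s) i = pt (phi U t) i := by
  have H : ∀ s t : List ℕ, phi U s <:+ phi U t → ∀ i < (phi U s).length,
      pt (phi U s) i = pt (phi U t) i := by
    intro s t hst i hi
    have h1 : pt (phi U t) ∈ cyl (phi U s) := mem_cyl_of_suffix hst (pt_mem _)
    have h2 := pt_mem (phi U s)
    rw [mem_cyl] at h1 h2
    exact res_eq_res.1 (h2.trans h1.symm) hi
  rcases h with h | h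
  · exact H s t (phi_mono hO hDe h) i hs
  · exact (H t s (phi_mono hO hDe h) i ht).symm

omit hO hDe

/-- The limit map of the scheme. -/
def limitMap (U : ℕ → Set (ℕ → ℕ)) (x : ℕ → ℕ) : ℕ → ℕ :=
  fun k => pt (phi U (res x (k + 1))) k

include hO hDe

lemma limitMap_mem_cyl (x : ℕ → ℕ) (n : ℕ) : limitMap U x ∈ cyl (phi U (res x n)) := by
  rw [mem_cyl]
  have h2 := pt_mem (phi U (res x n))
  rw [mem_cyl] at h2
  refine Eq.trans ?_ h2
  refine res_eq_res.2 fun i hi => ?_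
  show pt (phi U (res x (i + 1))) i = pt (phi U (res x n)) i
  refine pt_agree hO hDe ?_ ?_ hi
  · rcases le_total (i + 1) n with h | h
    · exact Or.inl (res_suffix x h)
    · exact Or.inr (res_suffix x h)
  · have := phi_length hO hDe (res x (i + 1))
    rw [res_length] at this
    omega

lemma limitMap_mem_U (x : ℕ → ℕ) (m : ℕ) : limitMap U x ∈ U m := by
  have h := limitMap_mem_cyl hO hDe x (m + 1)
  rw [res_succ] at h
  have := phi_subset hO hDe (x m) (res x m)
  rw [res_length] at this
  exact this h

omit hO hDe in
lemma limitMap_continuous : Continuous (limitMap U) := by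
  refine continuous_pi fun k => IsLocallyConstant.continuous ?_
  rw [IsLocallyConstant.iff_exists_open]
  intro x
  refine ⟨cylinder x (k + 1), isOpen_cylinder (E := fun _ : ℕ => ℕ) x (k + 1),
    self_mem_cylinder x (k + 1), fun y hy => ?_⟩
  show pt (phi U (res y (k + 1))) k = pt (phi U (res x (k + 1))) k
  rw [res_eq_res.2 fun i hi => mem_cylinder_iff.1 hy i hi]

lemma limitMap_injective : Function.Injective (limitMap U) := by
  intro x x' h
  by_contra hne
  have hres : res x (firstDiff x x') = res x' (firstDiff x x') :=
    res_eq_res.2 fun i hi => apply_eq_of_lt_firstDiff hi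
  have h1 : limitMap U x ∈ cyl (phi U (x (firstDiff x x') :: res x' (firstDiff x x'))) := by
    have := limitMap_mem_cyl hO hDe x (firstDiff x x' + 1)
    rwa [res_succ, hres] at this
  have h2 : limitMap U x ∈ cyl (phi U (x' (firstDiff x x') :: res x' (firstDiff x x'))) := by
    have := limitMap_mem_cyl hO hDe x' (firstDiff x x' + 1)
    rwa [res_succ, ← h] at this
  exact apply_firstDiff_ne hne (phi_child_unique hO hDe h1 h2)

lemma exists_preimage {y : ℕ → ℕ} (hy : ∀ m, y ∈ U m) :
    ∃ x, limitMap U x = y ∧ ∀ m, y ∈ cyl (phi U (res x m)) := by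
  have step : ∀ s : List ℕ, y ∈ cyl (phi U s) → ∃ n, y ∈ cyl (phi U (n :: s)) := by
    intro s hs
    obtain ⟨t', ht', hyt'⟩ := minExt_cover (hO s.length) hs (hy s.length)
    obtain ⟨n, hn⟩ := (childSeq_spec (hO s.length) (hDe s.length) (phi U s)).2.2 t' ht'
    refine ⟨n, ?_⟩
    show y ∈ cyl (childSeq (U s.length) (phi U s) n)
    rw [hn]
    exact hyt'
  choose c hc using step
  have hnil : y ∈ cyl (phi U []) := by
    show res y (List.length []) = phi U []
    rfl
  let S : ℕ → {s : List ℕ // y ∈ cyl (phi U s)} :=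
    fun m => Nat.rec ⟨[], hnil⟩ (fun _ p => ⟨c p.1 p.2 :: p.1, hc p.1 p.2⟩) m
  let x : ℕ → ℕ := fun m => c (S m).1 (S m).2
  have hres : ∀ m, res x m = (S m).1 := by
    intro m
    induction m with
    | zero => rfl
    | succ m ih =>
      rw [res_succ]
      show x m :: res x m = c (S m).1 (S m).2 :: (S m).1
      rw [ih]
  have hmem : ∀ m, y ∈ cyl (phi U (res x m)) := fun m => (hres m) ▸ (S m).2
  refine ⟨x, ?_, hmem⟩
  funext k
  have h1 := hmem (k + 1)
  have h2 := pt_mem (phi U (res x (k + 1)))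
  rw [mem_cyl] at h1 h2
  have h3 := res_eq_res.1 (h2.trans h1.symm)
  have h4 : k < (phi U (res x (k + 1))).length := by
    have := phi_length hO hDe (res x (k + 1))
    rw [res_length] at this
    omega
  exact h3 h4

lemma res_eq_of_mem {y w z : ℕ → ℕ} {n : ℕ} (hw : y ∈ cyl (phi U (res w n)))
    (hz : ∀ m, y ∈ cyl (phi U (res z m))) : res z n = res w n := by
  have key : ∀ m, m ≤ n → res z m = res w m := by
    intro m hm
    induction m with
    | zero => rfl
    | succ k ihk =>
      have hk : res z k = res w k := ihk (by omega)
      have hwk : y ∈ cyl (phi U (res w (k + 1))) :=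
        mem_cyl_of_suffix (phi_mono hO hDe (res_suffix w hm)) hw
      have hzk := hz (k + 1)
      rw [res_succ] at hwk
      rw [res_succ, hk] at hzk
      have : z k = w k := phi_child_unique hO hDe hzk hwk
      rw [res_succ, res_succ, hk, this]
  exact key n le_rfl

lemma image_cylinder (w : ℕ → ℕ) (n : ℕ) :
    limitMap U '' cylinder w n = (⋂ m, U m) ∩ cyl (phi U (res w n)) := by
  ext y
  constructor
  · rintro ⟨x, hx, rfl⟩
    refine ⟨mem_iInter.2 (limitMap_mem_U hO hDe x), ?_⟩
    have hres : res x n = res w n := res_eq_res.2 (mem_cylinder_iff.1 hx)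
    rw [← hres]
    exact limitMap_mem_cyl hO hDe x n
  · rintro ⟨hyD, hycyl⟩
    obtain ⟨x, hgx, hmem⟩ := exists_preimage hO hDe (fun m => mem_iInter.1 hyD m)
    refine ⟨x, ?_, hgx⟩
    have hres : res x n = res w n := res_eq_of_mem hO hDe hycyl hmem
    exact mem_cylinder_iff.2 fun i hi => res_eq_res.1 hres hi

omit hO hDe

lemma main (U : ℕ → Set (ℕ → ℕ)) (hO : ∀ m, IsOpen (U m)) (hDe : ∀ m, Dense (U m)) :
    Nonempty ((⋂ m, U m : Set (ℕ → ℕ)) ≃ₜ (ℕ → ℕ)) := by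
  let g : (ℕ → ℕ) → (⋂ m, U m : Set (ℕ → ℕ)) :=
    fun x => ⟨limitMap U x, mem_iInter.2 (limitMap_mem_U hO hDe x)⟩
  have hgc : Continuous g := (limitMap_continuous (U := U)).subtype_mk _
  have hgi : Function.Injective g := fun a b hab =>
    limitMap_injective hO hDe (congrArg Subtype.val hab)
  have hgs : Function.Surjective g := by
    rintro ⟨y, hy⟩
    obtain ⟨x, hx, -⟩ := exists_preimage hO hDe (fun m => mem_iInter.1 hy m)
    exact ⟨x, Subtype.ext hx⟩
  have hopen : IsOpenMap g := by
    intro V hV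
    have hbig : ∀ x : V, ∃ kk : ℕ, cylinder (x : ℕ → ℕ) kk ⊆ V := by
      rintro ⟨x, hx⟩
      obtain ⟨W, ⟨z, kk, rfl⟩, hxW, hWV⟩ :=
        (isTopologicalBasis_cylinders fun _ : ℕ => ℕ).exists_subset_of_mem_open hx hV
      exact ⟨kk, by rw [mem_cylinder_iff_eq.1 hxW]; exact hWV⟩
    choose k hk using hbig
    have hVeq : V = ⋃ x : V, cylinder (x : ℕ → ℕ) (k x) := by
      apply Set.Subset.antisymm
      · intro x hx
        exact mem_iUnion.2 ⟨⟨x, hx⟩, self_mem_cylinder _ _⟩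
      · exact Set.iUnion_subset fun x => hk x
    have himg : g '' V = Subtype.val ⁻¹' (⋃ x : V, cyl (phi U (res (x : ℕ → ℕ) (k x)))) := by
      ext ⟨d, hd⟩
      simp only [Set.mem_image, Set.mem_preimage, Set.mem_iUnion]
      constructor
      · rintro ⟨x, hx, hg⟩
        have hd' : limitMap U x = d := congrArg Subtype.val hg
        rw [hVeq] at hx
        obtain ⟨i, hi⟩ := mem_iUnion.1 hx
        have hmem : limitMap U x ∈ (⋂ m, U m) ∩ cyl (phi U (res (i : ℕ → ℕ) (k i))) := by
          rw [← image_cylinder hO hDe]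
          exact ⟨x, hi, rfl⟩
        exact ⟨i, hd' ▸ hmem.2⟩
      · rintro ⟨i, hi⟩
        have hmem : d ∈ limitMap U '' cylinder (i : ℕ → ℕ) (k i) := by
          rw [image_cylinder hO hDe]
          exact ⟨hd, hi⟩
        obtain ⟨x, hx, hxd⟩ := hmem
        have hxV : x ∈ V := by
          rw [hVeq]
          exact mem_iUnion.2 ⟨i, hx⟩
        exact ⟨x, hxV, Subtype.ext hxd⟩
    rw [himg]
    exact (isOpen_iUnion fun i => isOpen_cyl _).preimage continuous_subtype_val
  exact ⟨(Equiv.toHomeomorphOfContinuousOpen (Equiv.ofBijective g ⟨hgi, hgs⟩) hgc hopen).symm⟩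

end

end BaireHomeo

theorem dense_Gdelta_homeo_baire (D : Set (ℕ → ℕ)) (hD : IsGδ D) (hdense : Dense D) :
    Nonempty (D ≃ₜ (ℕ → ℕ)) := by
  obtain ⟨T, hTo, hTc, hTeq⟩ := hD
  obtain ⟨f, hf⟩ := (hTc.insert Set.univ).exists_eq_range (Set.insert_nonempty _ _)
  have hOf : ∀ n, IsOpen (f n) := by
    intro n
    have hmem : f n ∈ insert Set.univ T := hf ▸ Set.mem_range_self n
    rcases Set.mem_insert_iff.1 hmem with h | h
    · rw [h]; exact isOpen_univ
    · exact hTo _ h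
  have hDeq : D = ⋂ n, f n := by
    rw [hTeq, ← Set.sInter_range, ← hf, Set.sInter_insert, Set.univ_inter]
  have hDen : ∀ n, Dense (f n) := by
    intro n
    refine Dense.mono ?_ hdense
    rw [hDeq]
    exact Set.iInter_subset f n
  rw [hDeq]
  exact BaireHomeo.main f hOf hDen
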